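/- Let R be a commutative noetherian local ring, M a finitely generated R-module, and T the torsion submodule of a finitely generated R-module N. If M ⊗_R N is torsion-free and Tor_1^R(M, N/T) = 0, then M ⊗_R T = 0; if moreover Supp M = Spec R (e.g. M ≠ 0 faithful with full support), then T = 0, i.e., N is torsion-free. -/

import Mathlib

open CategoryTheory TensorProduct IsLocalRing

section Aux

open LinearMap

private lemma aux_step1 {R M P2 P1 P0 : Type} [CommRing R]
    [AddCommGroup M] [Module R M] [AddCommGroup P2] [Module R P2]
    [AddCommGroup P1] [Module R P1] [AddCommGroup P0] [Module R P0]
    (d2 : P2 →ₗ[R] P1) (d1 : P1 →ₗ[R] P0) (K : Submodule R P0)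
    (hrange : range d1 = K) (h21 : d1 ∘ₗ d2 = 0)
    (hH1 : ∀ w : M ⊗[R] P1, lTensor M d1 w = 0 → ∃ v, lTensor M d2 v = w) :
    Function.Injective (lTensor M K.subtype) := by
  have hmem : ∀ x, d1 x ∈ K := fun x => hrange ▸ mem_range_self d1 x
  set θ : P1 →ₗ[R] K := d1.codRestrict K hmem with hθ
  have hsurjθ : Function.Surjective θ := by
    rintro ⟨y, hy⟩
    rw [← hrange] at hy
    obtain ⟨x, hx⟩ := hy
    exact ⟨x, Subtype.ext hx⟩
  have hcomp : K.subtype ∘ₗ θ = d1 := rfl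
  rw [injective_iff_map_eq_zero]
  intro z hz
  obtain ⟨w, hw⟩ := lTensor_surjective M hsurjθ z
  have hd1w : lTensor M d1 w = 0 := by
    rw [← hcomp, lTensor_comp, LinearMap.coe_comp, Function.comp_apply, hw, hz]
  obtain ⟨v, hv⟩ := hH1 w hd1w
  have hθd2 : θ ∘ₗ d2 = 0 := by
    ext x
    simpa [θ] using LinearMap.congr_fun h21 x
  rw [← hw, ← hv, ← lTensor_comp_apply, hθd2, lTensor_zero, LinearMap.zero_apply]

private lemma aux_step2 {R M P2 P1 P0 Q N T : Type} [CommRing R]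
    [AddCommGroup M] [Module R M] [AddCommGroup P2] [Module R P2]
    [AddCommGroup P1] [Module R P1] [AddCommGroup P0] [Module R P0]
    [AddCommGroup Q] [Module R Q] [AddCommGroup N] [Module R N]
    [AddCommGroup T] [Module R T]
    (d2 : P2 →ₗ[R] P1) (d1 : P1 →ₗ[R] P0) (ε : P0 →ₗ[R] Q)
    (π : N →ₗ[R] Q) (ι : T →ₗ[R] N)
    (h21 : d1 ∘ₗ d2 = 0)
    (h10 : range d1 = ker ε)
    (hε : Function.Surjective ε)
    (hι : Function.Injective ι) (hιπ : range ι = ker π)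
    (φ : P0 →ₗ[R] N) (hφ : π ∘ₗ φ = ε)
    (hH1 : ∀ w : M ⊗[R] P1, lTensor M d1 w = 0 → ∃ v, lTensor M d2 v = w) :
    Function.Injective (lTensor M ι) := by
  set K : Submodule R P0 := ker ε with hK
  have hinj : Function.Injective (lTensor M K.subtype) :=
    aux_step1 d2 d1 K h10 h21 hH1
  have hφK : ∀ k : K, φ (k : P0) ∈ range ι := by
    intro k
    rw [hιπ, mem_ker, ← LinearMap.comp_apply, hφ]
    exact k.2
  set e : T ≃ₗ[R] range ι := LinearEquiv.ofInjective ι hι with he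
  set ψ : K →ₗ[R] T :=
    e.symm.toLinearMap ∘ₗ (φ ∘ₗ K.subtype).codRestrict (range ι) hφK with hψdef
  have hψ : ∀ k : K, ι (ψ k) = φ (k : P0) := by
    intro k
    have : (e (ψ k) : N) = ι (ψ k) := rfl
    rw [← this, hψdef]
    simp [e]
    rfl
  set ρ : P0 × T →ₗ[R] N := φ ∘ₗ fst R P0 T + ι ∘ₗ snd R P0 T with hρdef
  have hρ : Function.Surjective ρ := by
    intro n
    obtain ⟨p, hp⟩ := hε (π n)
    have : n - φ p ∈ range ι := by
      rw [hιπ, mem_ker, map_sub, ← LinearMap.comp_apply, hφ, hp, sub_self]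
    obtain ⟨t, ht⟩ := this
    exact ⟨(p, t), by simp [ρ, ht]⟩
  set u : K →ₗ[R] P0 × T := K.subtype.prod (-ψ) with hu
  have hexact : Function.Exact u ρ := by
    intro y
    constructor
    · intro hy
      have hy1 : φ y.1 + ι y.2 = 0 := by simpa [ρ] using hy
      have hyK : y.1 ∈ K := by
        have h2 : π (ι y.2) = 0 := by
          have : ι y.2 ∈ ker π := hιπ ▸ mem_range_self ι y.2
          exact this
        have h3 : π (φ y.1) = 0 := by
          have := congrArg π hy1
          rwa [map_add, h2, add_zero, map_zero] at this
        show ε y.1 = 0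
        rw [← hφ]
        exact h3
      refine ⟨⟨y.1, hyK⟩, ?_⟩
      have : ι (ψ ⟨y.1, hyK⟩) = φ y.1 := hψ _
      have h3 : ι (ψ ⟨y.1, hyK⟩) = ι (-y.2) := by
        rw [this, map_neg]
        exact eq_neg_of_add_eq_zero_left hy1
      have h4 : ψ ⟨y.1, hyK⟩ = -y.2 := hι h3
      simp [u, h4]
    · rintro ⟨k, rfl⟩
      simp [ρ, u, hψ k]
  have htens : Function.Exact (lTensor M u) (lTensor M ρ) := lTensor_exact M hexact hρ
  rw [injective_iff_map_eq_zero]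
  intro x hx
  set X : M ⊗[R] (P0 × T) := lTensor M (inr R P0 T) x with hXdef
  have hρinr : ρ ∘ₗ inr R P0 T = ι := by ext t; simp [ρ]
  have hX0 : lTensor M ρ X = 0 := by
    rw [hXdef, ← lTensor_comp_apply, hρinr, hx]
  obtain ⟨z, hz⟩ := (htens X).mp hX0
  have hfstu : fst R P0 T ∘ₗ u = K.subtype := by ext k; simp [u]
  have hfstinr : fst R P0 T ∘ₗ inr R P0 T = 0 := by ext t; simp
  have hz0 : z = 0 := by
    apply hinj
    rw [map_zero, ← hfstu, lTensor_comp_apply, hz, hXdef, ← lTensor_comp_apply,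
      hfstinr, lTensor_zero, LinearMap.zero_apply]
  have hX : X = 0 := by rw [← hz, hz0, map_zero]
  have hsndinr : snd R P0 T ∘ₗ inr R P0 T = LinearMap.id := by ext t; simp
  calc x = lTensor M (snd R P0 T) X := by
            rw [hXdef, ← lTensor_comp_apply, hsndinr, lTensor_id, LinearMap.id_apply]
    _ = 0 := by rw [hX, map_zero]

/-- every element of `M ⊗ (torsion N)` is killed by a nonzerodivisor -/
private lemma aux_tor_smul {R M N : Type} [CommRing R] [AddCommGroup M] [Module R M]
    [AddCommGroup N] [Module R N] (x : M ⊗[R] (Submodule.torsion R N)) :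
    ∃ r ∈ nonZeroDivisors R, r • x = 0 := by
  induction x with
  | zero => exact ⟨1, one_mem _, smul_zero 1⟩
  | tmul m t =>
    obtain ⟨a, ha⟩ := (Submodule.mem_torsion_iff _).mp t.2
    refine ⟨(a : R), a.2, ?_⟩
    have h0 : (a : R) • t = 0 := Subtype.ext (by simpa [Submonoid.smul_def] using ha)
    rw [← tmul_smul, h0, tmul_zero]
  | add x y hx hy =>
    obtain ⟨r, hr, hrx⟩ := hx
    obtain ⟨s, hs, hsy⟩ := hy
    refine ⟨r * s, mul_mem hr hs, ?_⟩
    have h1 : (r * s) • x = 0 := by rw [mul_comm, mul_smul, hrx, smul_zero]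
    have h2 : (r * s) • y = 0 := by rw [mul_smul, hsy, smul_zero]
    rw [smul_add, h1, h2, add_zero]

private lemma aux_nontrivial {R A B : Type} [CommRing R] [IsLocalRing R]
    [AddCommGroup A] [Module R A] [AddCommGroup B] [Module R B]
    [Module.Finite R A] [Module.Finite R B] [Nontrivial A] [Nontrivial B] :
    Nontrivial (A ⊗[R] B) := by
  obtain ⟨I, f, hI, hf⟩ := Module.exists_surjective_quotient_of_finite R A
  obtain ⟨J, g, hJ, hg⟩ := Module.exists_surjective_quotient_of_finite R B
  set m := maximalIdeal R with hm
  haveI : Nontrivial (R ⧸ m) := Ideal.Quotient.nontrivial_iff.mpr (maximalIdeal.isMaximal R).ne_top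
  let fI : (R ⧸ I) →ₗ[R] (R ⧸ m) := Submodule.mapQ I m LinearMap.id (le_maximalIdeal hI)
  let gJ : (R ⧸ J) →ₗ[R] (R ⧸ m) := Submodule.mapQ J m LinearMap.id (le_maximalIdeal hJ)
  have hfI : Function.Surjective (fI ∘ₗ f) := by
    intro x
    obtain ⟨y, rfl⟩ := Submodule.mkQ_surjective m x
    obtain ⟨a, ha⟩ := hf (Submodule.Quotient.mk y)
    exact ⟨a, by rw [LinearMap.comp_apply, ha]; erw [Submodule.mapQ_apply]⟩
  have hgJ : Function.Surjective (gJ ∘ₗ g) := by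
    intro x
    obtain ⟨y, rfl⟩ := Submodule.mkQ_surjective m x
    obtain ⟨a, ha⟩ := hg (Submodule.Quotient.mk y)
    exact ⟨a, by rw [LinearMap.comp_apply, ha]; erw [Submodule.mapQ_apply]⟩
  let ψ : (A ⊗[R] B) →ₗ[R] (R ⧸ m) :=
    (LinearMap.mul' R (R ⧸ m)) ∘ₗ TensorProduct.map (fI ∘ₗ f) (gJ ∘ₗ g)
  have hψ : Function.Surjective ψ := by
    intro x
    obtain ⟨a, ha⟩ := hfI x
    obtain ⟨b, hb⟩ := hgJ 1
    exact ⟨a ⊗ₜ b, by simp [ψ, ha, hb]⟩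
  exact hψ.nontrivial

end Aux

/-- `Tor_i^R(M,N)` as an object of `ModuleCat R`. -/
noncomputable def TorM (R : Type) [CommRing R] (i : ℕ)
    (M N : Type) [AddCommGroup M] [Module R M] [AddCommGroup N] [Module R N] : ModuleCat R :=
  ((Tor (ModuleCat R) i).obj (ModuleCat.of R M)).obj (ModuleCat.of R N)

/-- Let `T` be the torsion submodule of `N`. If `M ⊗_R N` is torsion-free and
`Tor₁(M, N/T) = 0`, then `M ⊗_R T = 0`; if moreover `M` has full support, then `T = 0`. -/
theorem torsion_eq_bot_of_torsionFree_tensor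
    (R : Type) [CommRing R] [IsNoetherianRing R] [IsLocalRing R]
    (M N : Type) [AddCommGroup M] [Module R M] [AddCommGroup N] [Module R N]
    [Module.Finite R M] [Module.Finite R N]
    (htf : Submodule.torsion R (M ⊗[R] N) = ⊥)
    (htor1 : Subsingleton (TorM R 1 M (N ⧸ Submodule.torsion R N))) :
    Subsingleton (M ⊗[R] (Submodule.torsion R N)) ∧
      ((∀ (p : Ideal R) (hp : p.IsPrime),
          ¬ Subsingleton (LocalizedModule p.primeCompl M)) →
        Submodule.torsion R N = ⊥) := by
  classical
  open MonoidalCategory LinearMap in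
  set T : Submodule R N := Submodule.torsion R N with hTdef
  -- set up a projective resolution of N ⧸ T and extract the needed exactness data
  let Qm : ModuleCat R := ModuleCat.of R (N ⧸ T)
  let P : ProjectiveResolution Qm := (HasProjectiveResolution.out (Z := Qm)).some
  let F : ModuleCat R ⥤ ModuleCat R := (tensoringLeft (ModuleCat R)).obj (ModuleCat.of R M)
  have hTor : Subsingleton ((F.leftDerived 1).obj Qm) := htor1
  have hIsZero : Limits.IsZero ((F.leftDerived 1).obj Qm) := ModuleCat.isZero_of_subsingleton _
  let C : HomologicalComplex (ModuleCat R) (ComplexShape.down ℕ) :=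
    (F.mapHomologicalComplex (ComplexShape.down ℕ)).obj P.complex
  have hIsZeroH : Limits.IsZero ((HomologicalComplex.homologyFunctor (ModuleCat R) _ 1).obj C) :=
    hIsZero.of_iso (P.isoLeftDerivedObj F 1).symm
  have hexact1 : C.ExactAt 1 :=
    (C.exactAt_iff_isZero_homology 1).mpr hIsZeroH
  have hexact' : (C.sc' 2 1 0).Exact :=
    (C.exactAt_iff' 2 1 0 (by simp) (by simp)).mp hexact1
  have hH1 : ∀ w : M ⊗[R] (P.complex.X 1), lTensor M (P.complex.d 1 0).hom w = 0 →
      ∃ v : M ⊗[R] (P.complex.X 2), lTensor M (P.complex.d 2 1).hom v = w := by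
    intro w hw
    obtain ⟨v, hv⟩ := (ShortComplex.moduleCat_exact_iff _).mp hexact' w hw
    exact ⟨v, hv⟩
  let εL : P.complex.X 0 →ₗ[R] (N ⧸ T) := (P.π.f 0).hom
  have hεsurj : Function.Surjective εL :=
    (ModuleCat.epi_iff_surjective (P.π.f 0)).mp inferInstance
  have hexact0 : (ShortComplex.mk (P.complex.d 1 0) (P.π.f 0)
      P.complex_d_comp_π_f_zero).Exact :=
    ShortComplex.exact_of_g_is_cokernel _ P.isColimitCokernelCofork
  have h10 : range (P.complex.d 1 0).hom = ker εL :=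
    (ShortComplex.moduleCat_exact_iff_range_eq_ker _).mp hexact0
  have h21 : (P.complex.d 1 0).hom ∘ₗ
      (P.complex.d 2 1).hom = 0 := by
    have := P.complex.d_comp_d 2 1 0
    have := congrArg ModuleCat.Hom.hom this
    rwa [ModuleCat.hom_comp, ModuleCat.hom_zero] at this
  have hproj : Module.Projective R (P.complex.X 0) :=
    (IsProjective.iff_projective _).mpr (P.projective 0)
  obtain ⟨φ, hφ⟩ := Module.projective_lifting_property T.mkQ εL (T.mkQ_surjective)
  -- the key injectivity, and part 1
  have hinj : Function.Injective (lTensor M T.subtype) :=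
    aux_step2 (P.complex.d 2 1).hom (P.complex.d 1 0).hom εL T.mkQ T.subtype h21 h10 hεsurj
      T.injective_subtype (by rw [Submodule.range_subtype, Submodule.ker_mkQ]) φ hφ hH1
  have hsub : Subsingleton (M ⊗[R] T) := by
    refine subsingleton_of_forall_eq 0 fun x => ?_
    apply hinj
    rw [map_zero]
    have hmem : lTensor M T.subtype x ∈ Submodule.torsion R (M ⊗[R] N) := by
      obtain ⟨r, hr, hrx⟩ := aux_tor_smul x
      exact ⟨⟨r, hr⟩, by rw [Submonoid.smul_def, ← map_smul, hrx, map_zero]⟩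
    rw [htf] at hmem
    simpa using hmem
  refine ⟨hsub, fun hsupp => ?_⟩
  -- part 2
  by_contra hne
  haveI : Nontrivial T := Submodule.nontrivial_iff_ne_bot.mpr hne
  haveI : IsNoetherian R N := isNoetherian_of_isNoetherianRing_of_finite R N
  haveI : Module.Finite R T := Module.Finite.iff_fg.mpr (IsNoetherian.noetherian T)
  haveI : Nontrivial M := by
    by_contra h
    rw [not_nontrivial_iff_subsingleton] at h
    refine hsupp (IsLocalRing.maximalIdeal R) inferInstance ?_
    constructor
    intro a b
    induction a using LocalizedModule.induction_on with
    | h m s =>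
      induction b using LocalizedModule.induction_on with
      | h m' s' =>
        rw [LocalizedModule.mk_eq]
        exact ⟨1, Subsingleton.elim _ _⟩
  have : Nontrivial (M ⊗[R] T) := aux_nontrivial
  exact (not_subsingleton_iff_nontrivial.mpr this) hsub
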